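/- Let G be a finite group acting faithfully and primitively on a finite set V, and suppose the stabiliser of each point of V is abelian and nontrivial. Then the stabilisers of any two distinct points of V intersect trivially; that is, G acts on V as a Frobenius group. -/

import Mathlib

/-- Let `G` be a finite group acting faithfully and primitively on a
finite set `V` (transitively, with every point stabiliser a maximal subgroup), and
suppose each point stabiliser is abelian and nontrivial.  Then the stabilisers of any
two distinct points intersect trivially; i.e. `G` acts on `V` as a Frobenius group. -/
theorem frobenius_of_primitive_abelian_stabilizers
    (G : Type) [Group G] [Finite G] (V : Type) [Finite V] [MulAction G V]
    (hfaith : ∀ g : G, (∀ v : V, g • v = v) → g = 1)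
    (htrans : MulAction.IsPretransitive G V)
    (hmax : ∀ v : V, IsCoatom (MulAction.stabilizer G v))
    (hab : ∀ v : V, ∀ g ∈ MulAction.stabilizer G v, ∀ h ∈ MulAction.stabilizer G v,
      g * h = h * g)
    (hnt : ∀ v : V, MulAction.stabilizer G v ≠ ⊥) :
    ∀ v w : V, v ≠ w →
      MulAction.stabilizer G v ⊓ MulAction.stabilizer G w = ⊥ := by
  intro v w hvw
  rw [Subgroup.eq_bot_iff_forall]
  intro g hg
  by_contra hg1
  have hgv : g ∈ MulAction.stabilizer G v := hg.1
  have hgw : g ∈ MulAction.stabilizer G w := hg.2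
  -- both stabilizers centralize g
  have hcv : MulAction.stabilizer G v ≤ Subgroup.centralizer {g} := by
    intro h hh
    rw [Subgroup.mem_centralizer_singleton_iff]
    exact (hab v g hgv h hh).symm
  have hcw : MulAction.stabilizer G w ≤ Subgroup.centralizer {g} := by
    intro h hh
    rw [Subgroup.mem_centralizer_singleton_iff]
    exact (hab w g hgw h hh).symm
  rcases lt_or_eq_of_le (le_sup_left :
      MulAction.stabilizer G v ≤ MulAction.stabilizer G v ⊔ MulAction.stabilizer G w) with hlt | heq
  · -- sup is top, so g is central, hence fixes everything, so g = 1
    have htop := (hmax v).2 _ hlt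
    have hcent : Subgroup.centralizer {g} = ⊤ := by
      refine top_le_iff.mp ?_
      rw [← htop]
      exact sup_le hcv hcw
    apply hg1
    apply hfaith
    intro u
    obtain ⟨h, rfl⟩ := htrans.exists_smul_eq v u
    have hcomm : g * h = h * g := by
      have : h ∈ Subgroup.centralizer {g} := by rw [hcent]; trivial
      exact (Subgroup.mem_centralizer_singleton_iff.mp this).symm
    calc g • h • v = (g * h) • v := (mul_smul g h v).symm
      _ = (h * g) • v := by rw [hcomm]
      _ = h • g • v := mul_smul h g v
      _ = h • v := by rw [hgv]
  · -- stabilizer w ≤ stabilizer v; equal cards force equality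
    have hle : MulAction.stabilizer G w ≤ MulAction.stabilizer G v := by
      rw [heq]; exact le_sup_right
    obtain ⟨k, hk⟩ := htrans.exists_smul_eq v w
    have hconj : MulAction.stabilizer G w =
        (MulAction.stabilizer G v).map (MulAut.conj k).toMonoidHom := by
      rw [← hk, MulAction.stabilizer_smul_eq_stabilizer_map_conj]
    have hcard : Nat.card (MulAction.stabilizer G w) = Nat.card (MulAction.stabilizer G v) := by
      rw [hconj]
      exact (Nat.card_congr ((MulAction.stabilizer G v).equivMapOfInjective
        (MulAut.conj k).toMonoidHom (MulAut.conj k).injective).toEquiv).symm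
    have heqst : MulAction.stabilizer G w = MulAction.stabilizer G v :=
      Subgroup.eq_of_le_of_card_ge hle hcard.ge
    -- normalizer of stabilizer v is itself
    have hnorm : Subgroup.normalizer (MulAction.stabilizer G v : Set G) = MulAction.stabilizer G v := by
      rcases lt_or_eq_of_le (Subgroup.le_normalizer :
          MulAction.stabilizer G v ≤ Subgroup.normalizer (MulAction.stabilizer G v : Set G)) with h1 | h1
      · exfalso
        have hN : Subgroup.Normal (MulAction.stabilizer G v) := by
          rw [← Subgroup.normalizer_eq_top_iff]
          exact (hmax v).2 _ h1
        apply hnt v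
        rw [Subgroup.eq_bot_iff_forall]
        intro x hx
        apply hfaith
        intro u
        obtain ⟨h, rfl⟩ := htrans.exists_smul_eq v u
        have : h⁻¹ * x * h ∈ MulAction.stabilizer G v := hN.conj_mem' x hx h
        have hfix : (h⁻¹ * x * h) • v = v := this
        have hxh : x * h = h * (h⁻¹ * x * h) := by group
        calc x • h • v = (x * h) • v := (mul_smul _ _ _).symm
          _ = (h * (h⁻¹ * x * h)) • v := by rw [hxh]
          _ = h • (h⁻¹ * x * h) • v := mul_smul _ _ _
          _ = h • v := by rw [hfix]
      · exact h1.symm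
    -- k normalizes stabilizer v, hence k ∈ stabilizer v, hence w = v
    have hmapeq : Subgroup.map (MulAut.conj k).toMonoidHom (MulAction.stabilizer G v)
        = MulAction.stabilizer G v := by rw [← hconj, heqst]
    have hkn : k ∈ Subgroup.normalizer (MulAction.stabilizer G v : Set G) := by
      rw [Subgroup.mem_normalizer_iff]
      intro x
      constructor
      · intro hx
        rw [← hmapeq]
        exact ⟨x, hx, rfl⟩
      · intro hx
        rw [← hmapeq] at hx
        obtain ⟨y, hy, hxy⟩ := hx
        have hxy' : k * y * k⁻¹ = k * x * k⁻¹ := hxy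
        have hyx : y = x := mul_left_cancel (mul_right_cancel hxy')
        exact hyx ▸ hy
    apply hvw
    rw [← hk]
    have : k ∈ MulAction.stabilizer G v := hnorm ▸ hkn
    exact (this : k • v = v).symm
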